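/- Let B be a 3×3 real skew-symmetrizable matrix that is cyclic. Then B is cluster-cyclic (i.e., every matrix obtained from B by any finite sequence of matrix mutations is cyclic) if and only if |b_{ij} b_{ji}| ≥ 4 for all i ≠ j and |b_{12}b_{21}| + |b_{23}b_{32}| + |b_{31}b_{13}| − |b_{12}b_{23}b_{31}| ≤ 4. -/

import Mathlib

open Matrix

noncomputable section
set_option maxHeartbeats 1000000


abbrev Mat3 := Matrix (Fin 3) (Fin 3) ℝ

def pPart {n : ℕ} (A : Matrix (Fin n) (Fin n) ℝ) : Matrix (Fin n) (Fin n) ℝ :=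
  Matrix.of fun i j => max (A i j) 0

def Jmat {n : ℕ} (k : Fin n) : Matrix (Fin n) (Fin n) ℝ :=
  Matrix.diagonal fun i => if i = k then -1 else 1

/-- `A^{•k}`: keep only column `k`. -/
def colSel {n : ℕ} (k : Fin n) (A : Matrix (Fin n) (Fin n) ℝ) : Matrix (Fin n) (Fin n) ℝ :=
  Matrix.of fun i j => if j = k then A i j else 0

/-- `A^{k•}`: keep only row `k`. -/
def rowSel {n : ℕ} (k : Fin n) (A : Matrix (Fin n) (Fin n) ℝ) : Matrix (Fin n) (Fin n) ℝ :=
  Matrix.of fun i j => if i = k then A i j else 0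

/-- Matrix mutation in direction `k`. -/
def mutB {n : ℕ} (k : Fin n) (B : Matrix (Fin n) (Fin n) ℝ) : Matrix (Fin n) (Fin n) ℝ :=
  (Jmat k + colSel k (pPart (-B))) * B * (Jmat k + rowSel k (pPart B))

/-- One step of the simultaneous `(B, C, G)` recursion, mutating at direction `k`. -/
def CGstep {n : ℕ} (B0 : Matrix (Fin n) (Fin n) ℝ)
    (p : Matrix (Fin n) (Fin n) ℝ × Matrix (Fin n) (Fin n) ℝ × Matrix (Fin n) (Fin n) ℝ)
    (k : Fin n) :
    Matrix (Fin n) (Fin n) ℝ × Matrix (Fin n) (Fin n) ℝ × Matrix (Fin n) (Fin n) ℝ :=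
  (mutB k p.1,
   p.2.1 * Jmat k + p.2.1 * rowSel k (pPart p.1) + colSel k (pPart (-p.2.1)) * p.1,
   p.2.2 * Jmat k + p.2.2 * colSel k (pPart (-p.1)) - B0 * colSel k (pPart (-p.2.1)))

def CGmat {n : ℕ} (B : Matrix (Fin n) (Fin n) ℝ) (w : List (Fin n)) :
    Matrix (Fin n) (Fin n) ℝ × Matrix (Fin n) (Fin n) ℝ × Matrix (Fin n) (Fin n) ℝ :=
  w.foldl (CGstep B) (B, 1, 1)

/-- The exchange matrix `B^w`. -/
def Bmat {n : ℕ} (B : Matrix (Fin n) (Fin n) ℝ) (w : List (Fin n)) : Matrix (Fin n) (Fin n) ℝ :=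
  (CGmat B w).1

/-- The `C`-matrix `C^w`. -/
def Cmat {n : ℕ} (B : Matrix (Fin n) (Fin n) ℝ) (w : List (Fin n)) : Matrix (Fin n) (Fin n) ℝ :=
  (CGmat B w).2.1

/-- The `G`-matrix `G^w`. -/
def Gmat {n : ℕ} (B : Matrix (Fin n) (Fin n) ℝ) (w : List (Fin n)) : Matrix (Fin n) (Fin n) ℝ :=
  (CGmat B w).2.2

/-- A sequence is reduced if consecutive entries differ. -/
def ReducedSeq {n : ℕ} (w : List (Fin n)) : Prop := w.Chain' (· ≠ ·)

def SkewSymmetrizable {n : ℕ} (B : Matrix (Fin n) (Fin n) ℝ) : Prop :=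
  ∃ d : Fin n → ℝ, (∀ i, 0 < d i) ∧ (Matrix.diagonal d * B)ᵀ = -(Matrix.diagonal d * B)

def cyclicPattern : Mat3 := !![0,-1,1; 1,0,-1; -1,1,0]

/-- A rank-3 exchange matrix is cyclic if its sign pattern is `± cyclicPattern`. -/
def IsCyclic3 (B : Mat3) : Prop :=
  (∀ i j, Real.sign (B i j) = cyclicPattern i j) ∨
  (∀ i j, Real.sign (B i j) = - cyclicPattern i j)

/-- `B` is cluster-cyclic if every iterated mutation along a reduced sequence is cyclic. -/
def ClusterCyclic (B : Mat3) : Prop :=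
  ∀ w : List (Fin 3), ReducedSeq w → IsCyclic3 (Bmat B w)

/-- `ε` is a family of tropical signs for the (sign-coherent) `C`-pattern of `B`. -/
def IsTropSigns (B : Mat3) (ε : List (Fin 3) → Fin 3 → ℝ) : Prop :=
  ∀ w : List (Fin 3), ReducedSeq w → ∀ i : Fin 3,
    (ε w i = 1 ∨ ε w i = -1) ∧ ∀ j, 0 ≤ ε w i * Cmat B w j i


-- ===== auxiliary development =====











-- ===== helpers =====

lemma sign_eq_one_iff' {x : ℝ} : Real.sign x = 1 ↔ 0 < x := by
  rcases lt_trichotomy x 0 with h | h | h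
  · rw [Real.sign_of_neg h]; constructor <;> intro hh <;> [norm_num at hh; linarith]
  · subst h; rw [Real.sign_zero]; constructor <;> intro hh <;> [norm_num at hh; linarith]
  · rw [Real.sign_of_pos h]; simp [h]

lemma sign_eq_neg_one_iff' {x : ℝ} : Real.sign x = -1 ↔ x < 0 := by
  rcases lt_trichotomy x 0 with h | h | h
  · rw [Real.sign_of_neg h]; simp [h]
  · subst h; rw [Real.sign_zero]; constructor <;> intro hh <;> [norm_num at hh; linarith]
  · rw [Real.sign_of_pos h]; constructor <;> intro hh <;> [norm_num at hh; linarith]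

lemma sq_inj {x y : ℝ} (hx : 0 ≤ x) (hy : 0 ≤ y) (h : x^2 = y^2) : x = y := by
  rw [← Real.sqrt_sq hx, h, Real.sqrt_sq hy]

lemma maxid (u v : ℝ) : max u 0 * v + u * max (-v) 0 = max (-u) 0 * v + u * max v 0 := by
  rcases le_total u 0 with h | h <;> rcases le_total v 0 with h' | h'
  · rw [max_eq_right h, max_eq_left (by linarith : (0:ℝ) ≤ -u),
        max_eq_right h', max_eq_left (by linarith : (0:ℝ) ≤ -v)]; ring
  · rw [max_eq_right h, max_eq_left (by linarith : (0:ℝ) ≤ -u),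
        max_eq_left h', max_eq_right (by linarith : -v ≤ (0:ℝ))]; ring
  · rw [max_eq_left h, max_eq_right (by linarith : -u ≤ (0:ℝ)),
        max_eq_right h', max_eq_left (by linarith : (0:ℝ) ≤ -v)]; ring
  · rw [max_eq_left h, max_eq_right (by linarith : -u ≤ (0:ℝ)),
        max_eq_left h', max_eq_right (by linarith : -v ≤ (0:ℝ))]; ring

lemma mutB_apply (B : Mat3) (k i j : Fin 3) (hkk : B k k = 0) :
    mutB k B i j = (if i = k then -1 else 1) * (if j = k then -1 else 1) * B i j
      + (if j = k then (-1:ℝ) else 1) * (max (-B i k) 0 * B k j)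
      + (if i = k then (-1:ℝ) else 1) * (B i k * max (B k j) 0) := by
  simp only [mutB, Matrix.mul_apply, Fin.sum_univ_three, Jmat, colSel, rowSel, pPart,
    Matrix.add_apply, Matrix.of_apply, Matrix.diagonal_apply, Matrix.neg_apply]
  have f0 : (⟨0, by norm_num⟩ : Fin 3) = 0 := rfl
  have f1 : (⟨1, by norm_num⟩ : Fin 3) = 1 := rfl
  have f2 : (⟨2, by norm_num⟩ : Fin 3) = 2 := rfl
  fin_cases k <;> fin_cases i <;> fin_cases j <;>
    simp only [f0, f1, f2, id_eq] at hkk ⊢ <;> simp [hkk] <;> ring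

/-- weight of the edge opposite vertex `k` -/
def wt (M : Mat3) (k : Fin 3) : ℝ := Real.sqrt |M (k+1) (k+2) * M (k+2) (k+1)|

lemma wt_0 (M : Mat3) : wt M 0 = Real.sqrt |M 1 2 * M 2 1| := rfl
lemma wt_1 (M : Mat3) : wt M 1 = Real.sqrt |M 2 0 * M 0 2| := rfl
lemma wt_2 (M : Mat3) : wt M 2 = Real.sqrt |M 0 1 * M 1 0| := rfl

lemma wt_nonneg (M : Mat3) (k : Fin 3) : 0 ≤ wt M k := Real.sqrt_nonneg _

lemma wt_sq (M : Mat3) (k : Fin 3) : wt M k ^ 2 = |M (k+1) (k+2) * M (k+2) (k+1)| :=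
  Real.sq_sqrt (abs_nonneg _)

lemma fin3_cases (i k : Fin 3) : i = k ∨ i = k + 1 ∨ i = k + 2 := by
  fin_cases i <;> fin_cases k <;> decide

lemma cycle3 (g : Fin 3 → ℝ) (k : Fin 3) :
    g 0 + g 1 + g 2 = g k + g (k+1) + g (k+2) := by
  fin_cases k <;> simp <;> ring

lemma cycle3E (g : Fin 3 → ℝ) (k : Fin 3) :
    g 0^2 + g 1^2 + g 2^2 - g 0 * g 1 * g 2
      = g k^2 + g (k+1)^2 + g (k+2)^2 - g k * g (k+1) * g (k+2) := by
  fin_cases k <;> simp <;> ring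

lemma exists_max3 (g : Fin 3 → ℝ) : ∃ k, ∀ j, g j ≤ g k := by
  have h3 : ∀ j : Fin 3, j = 0 ∨ j = 1 ∨ j = 2 := by decide
  rcases le_total (g 0) (g 1) with h | h <;> rcases le_total (g 1) (g 2) with h' | h' <;>
    rcases le_total (g 0) (g 2) with h'' | h''
  all_goals first
    | (refine ⟨2, fun j => ?_⟩; rcases h3 j with rfl | rfl | rfl <;> linarith)
    | (refine ⟨1, fun j => ?_⟩; rcases h3 j with rfl | rfl | rfl <;> linarith)
    | (refine ⟨0, fun j => ?_⟩; rcases h3 j with rfl | rfl | rfl <;> linarith)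

-- skew facts
lemma skew_diag {d : Fin 3 → ℝ} {B : Mat3} (hd : ∀ i, 0 < d i)
    (h : ∀ i j, d i * B i j = -(d j * B j i)) (k : Fin 3) : B k k = 0 := by
  have := h k k
  have hk := (hd k).ne'
  have : d k * B k k = 0 := by linarith
  rcases mul_eq_zero.mp this with h' | h'
  · exact absurd h' hk
  · exact h'

lemma skew_mut {d : Fin 3 → ℝ} {B : Mat3} (hd : ∀ i, 0 < d i)
    (h : ∀ i j, d i * B i j = -(d j * B j i)) (k : Fin 3) :
    ∀ i j, d i * mutB k B i j = -(d j * mutB k B j i) := by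
  intro i j
  have hkk := skew_diag hd h k
  rw [mutB_apply _ _ _ _ hkk, mutB_apply _ _ _ _ hkk]
  by_cases hik : i = k <;> by_cases hjk : j = k
  · rw [hik, hjk]; simp [hkk]
  · rw [hik]; simp [hkk, hjk]; linarith [h k j]
  · rw [hjk]; simp [hkk, hik]; linarith [h i k]
  · simp only [hik, hjk, if_false]
    -- cross-term cancellation
    have c1 : d i * (max (-B i k) 0 * B k j) + d j * (B j k * max (B k i) 0) = 0 := by
      rcases le_total (B i k) 0 with hu | hu
      · have hki : 0 ≤ B k i := by nlinarith [h i k, hd i, hd k]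
        rw [max_eq_left (by linarith : (0:ℝ) ≤ -B i k), max_eq_left hki]
        linear_combination (-(B k j)) * h i k + B k i * h j k
      · have hki : B k i ≤ 0 := by nlinarith [h i k, hd i, hd k]
        rw [max_eq_right (by linarith : -B i k ≤ (0:ℝ)), max_eq_right hki]
        ring
    have c2 : d i * (B i k * max (B k j) 0) + d j * (max (-B j k) 0 * B k i) = 0 := by
      rcases le_total (B k j) 0 with hv | hv
      · have hjk' : 0 ≤ B j k := by nlinarith [h j k, hd j, hd k]
        rw [max_eq_right hv, max_eq_right (by linarith : -B j k ≤ (0:ℝ))]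
        ring
      · have hjk' : B j k ≤ 0 := by nlinarith [h j k, hd j, hd k]
        rw [max_eq_left hv, max_eq_left (by linarith : (0:ℝ) ≤ -B j k)]
        linear_combination B k j * h i k - B k i * h j k
    simp only [one_mul]
    linarith [h i j, c1, c2]

lemma mutB_neg (B : Mat3) (k : Fin 3) (hkk : B k k = 0) :
    mutB k (-B) = -(mutB k B) := by
  ext i j
  have hkk' : (-B) k k = 0 := by simp [hkk]
  rw [Matrix.neg_apply, mutB_apply _ _ _ _ hkk', mutB_apply _ _ _ _ hkk]
  simp only [Matrix.neg_apply, neg_neg]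
  have := maxid (B i k) (B k j)
  by_cases hik : i = k <;> by_cases hjk : j = k <;> simp [hik, hjk, hkk] <;> nlinarith [this]

lemma IsCyclic3_neg {M : Mat3} : IsCyclic3 (-M) ↔ IsCyclic3 M := by
  have hs : ∀ (N : Mat3) (i j : Fin 3), Real.sign ((-N) i j) = -Real.sign (N i j) := by
    intro N i j; rw [Matrix.neg_apply, Real.sign_neg]
  constructor
  · rintro (h | h)
    · right; intro i j; have := h i j; rw [hs] at this; linarith
    · left; intro i j; have := h i j; rw [hs] at this; linarith
  · rintro (h | h)
    · right; intro i j; rw [hs, h i j]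
    · left; intro i j; rw [hs, h i j]; ring

lemma wt_neg (M : Mat3) (k : Fin 3) : wt (-M) k = wt M k := by
  unfold wt; congr 1; rw [Matrix.neg_apply, Matrix.neg_apply, neg_mul_neg]

lemma fin3all (z : Fin 3) : z = 0 ∨ z = 1 ∨ z = 2 := by fin_cases z <;> simp

lemma core1 (d : Fin 3 → ℝ) (hd : ∀ i, 0 < d i) (B : Mat3)
    (hskew : ∀ i j, d i * B i j = -(d j * B j i))
    (hsgn : ∀ i j, Real.sign (B i j) = cyclicPattern i j) :
    (0 < wt B 2 * wt B 0 - wt B 1 →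
      (∀ i j, Real.sign (mutB 1 B i j) = -cyclicPattern i j) ∧
      wt (mutB 1 B) 1 = wt B 2 * wt B 0 - wt B 1 ∧
      wt (mutB 1 B) 2 = wt B 2 ∧ wt (mutB 1 B) 0 = wt B 0) ∧
    (wt B 2 * wt B 0 - wt B 1 ≤ 0 → ¬ IsCyclic3 (mutB 1 B)) := by
  have h01 : B 0 1 < 0 := sign_eq_neg_one_iff'.mp
    (by rw [hsgn 0 1]; norm_num [cyclicPattern, Matrix.cons_val_two, Matrix.vecHead, Matrix.vecTail])
  have h02 : 0 < B 0 2 := sign_eq_one_iff'.mp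
    (by rw [hsgn 0 2]; norm_num [cyclicPattern, Matrix.cons_val_two, Matrix.vecHead, Matrix.vecTail])
  have h10 : 0 < B 1 0 := sign_eq_one_iff'.mp
    (by rw [hsgn 1 0]; norm_num [cyclicPattern, Matrix.cons_val_two, Matrix.vecHead, Matrix.vecTail])
  have h12 : B 1 2 < 0 := sign_eq_neg_one_iff'.mp
    (by rw [hsgn 1 2]; norm_num [cyclicPattern, Matrix.cons_val_two, Matrix.vecHead, Matrix.vecTail])
  have h20 : B 2 0 < 0 := sign_eq_neg_one_iff'.mp
    (by rw [hsgn 2 0]; norm_num [cyclicPattern, Matrix.cons_val_two, Matrix.vecHead, Matrix.vecTail])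
  have h21 : 0 < B 2 1 := sign_eq_one_iff'.mp
    (by rw [hsgn 2 1]; norm_num [cyclicPattern, Matrix.cons_val_two, Matrix.vecHead, Matrix.vecTail])
  have hB00 := skew_diag hd hskew 0
  have hB11 := skew_diag hd hskew 1
  have hB22 := skew_diag hd hskew 2
  -- entries of the mutated matrix
  have E00 : mutB 1 B 0 0 = 0 := by
    rw [mutB_apply B 1 0 0 hB11]; simp [hB00]
    rw [max_eq_left (by linarith : (0:ℝ) ≤ -B 0 1), max_eq_left (le_of_lt h10)]; ring
  have E11 : mutB 1 B 1 1 = 0 := by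
    rw [mutB_apply B 1 1 1 hB11]; simp [hB11]
  have E22 : mutB 1 B 2 2 = 0 := by
    rw [mutB_apply B 1 2 2 hB11]; simp [hB22]
    rw [max_eq_right (by linarith : -B 2 1 ≤ (0:ℝ)), max_eq_right (le_of_lt h12)]; ring
  have E01 : mutB 1 B 0 1 = -B 0 1 := by
    rw [mutB_apply B 1 0 1 hB11]; simp [hB11]
  have E10 : mutB 1 B 1 0 = -B 1 0 := by
    rw [mutB_apply B 1 1 0 hB11]; simp [hB11]
  have E12 : mutB 1 B 1 2 = -B 1 2 := by
    rw [mutB_apply B 1 1 2 hB11]; simp [hB11]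
  have E21 : mutB 1 B 2 1 = -B 2 1 := by
    rw [mutB_apply B 1 2 1 hB11]; simp [hB11]
  have E02 : mutB 1 B 0 2 = B 0 2 - B 0 1 * B 1 2 := by
    rw [mutB_apply B 1 0 2 hB11]; simp
    rw [max_eq_left (by linarith : (0:ℝ) ≤ -B 0 1), max_eq_right (le_of_lt h12)]; ring
  have E20 : mutB 1 B 2 0 = B 2 0 + B 2 1 * B 1 0 := by
    rw [mutB_apply B 1 2 0 hB11]; simp
    rw [max_eq_right (by linarith : -B 2 1 ≤ (0:ℝ)), max_eq_left (le_of_lt h10)]; ring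
  -- weights
  have hp2 : wt B 2 ^ 2 = -(B 0 1 * B 1 0) := by
    rw [wt_sq]; exact abs_of_neg (mul_neg_of_neg_of_pos h01 h10)
  have hq2 : wt B 0 ^ 2 = -(B 1 2 * B 2 1) := by
    rw [wt_sq]; exact abs_of_neg (mul_neg_of_neg_of_pos h12 h21)
  have hr2 : wt B 1 ^ 2 = -(B 2 0 * B 0 2) := by
    rw [wt_sq]; exact abs_of_neg (mul_neg_of_neg_of_pos h20 h02)
  have hp_pos : 0 < wt B 2 := Real.sqrt_pos.mpr (abs_pos.mpr (ne_of_lt (mul_neg_of_neg_of_pos h01 h10)))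
  have hq_pos : 0 < wt B 0 := Real.sqrt_pos.mpr (abs_pos.mpr (ne_of_lt (mul_neg_of_neg_of_pos h12 h21)))
  have hr_pos : 0 < wt B 1 := Real.sqrt_pos.mpr (abs_pos.mpr (ne_of_lt (mul_neg_of_neg_of_pos h20 h02)))
  have hddd : (0:ℝ) < d 0 * d 1 * d 2 := mul_pos (mul_pos (hd 0) (hd 1)) (hd 2)
  have hs : B 1 0 * B 2 1 * B 0 2 = -(B 0 1 * B 1 2 * B 2 0) := by
    apply mul_left_cancel₀ hddd.ne'
    linear_combination (d 2 * B 2 1 * d 0 * B 0 2) * hskew 0 1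
      + (d 0 * B 0 1 * d 2 * B 2 0) * hskew 1 2 - (d 0 * B 0 1 * d 2 * B 2 1) * hskew 2 0
  have hpqr : wt B 2 * wt B 0 * wt B 1 = -(B 0 1 * B 1 2 * B 2 0) := by
    apply sq_inj (by positivity)
      (by nlinarith [mul_pos (mul_pos (neg_pos.mpr h01) (neg_pos.mpr h12)) (neg_pos.mpr h20)])
    rw [mul_pow, mul_pow, hp2, hq2, hr2]
    linear_combination (-(B 0 1 * B 1 2 * B 2 0)) * hs
  have hprod : mutB 1 B 2 0 * mutB 1 B 0 2 = -((wt B 2 * wt B 0 - wt B 1)^2) := by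
    rw [E20, E02]
    linear_combination hr2 + (wt B 0)^2 * hp2 - (B 0 1 * B 1 0) * hq2 + hs - 2 * hpqr
  have hsgn02 : (-(mutB 1 B 0 2)) * (B 1 0 * B 2 1)
      = wt B 2 * wt B 0 * (wt B 2 * wt B 0 - wt B 1) := by
    rw [E02]
    linear_combination (-(wt B 0)^2) * hp2 + (B 0 1 * B 1 0) * hq2 - hs + hpqr
  constructor
  · intro hm
    have hB02' : mutB 1 B 0 2 < 0 := by
      by_contra hcon
      push_neg at hcon
      nlinarith [mul_pos h10 h21, mul_pos (mul_pos hp_pos hq_pos) hm]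
    have hB20' : 0 < mutB 1 B 2 0 := by
      by_contra hcon
      push_neg at hcon
      nlinarith [mul_nonneg (neg_nonneg.mpr hcon) (le_of_lt (neg_pos.mpr hB02')), mul_pos hm hm]
    refine ⟨?_, ?_, ?_, ?_⟩
    · have S00 : Real.sign (mutB 1 B 0 0) = -cyclicPattern 0 0 := by
        rw [E00, Real.sign_zero]; norm_num [cyclicPattern, Matrix.cons_val_two, Matrix.vecHead, Matrix.vecTail]
      have S01 : Real.sign (mutB 1 B 0 1) = -cyclicPattern 0 1 := by
        rw [E01, Real.sign_of_pos (by linarith : (0:ℝ) < -B 0 1)]; norm_num [cyclicPattern, Matrix.cons_val_two, Matrix.vecHead, Matrix.vecTail]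
      have S02 : Real.sign (mutB 1 B 0 2) = -cyclicPattern 0 2 := by
        rw [Real.sign_of_neg hB02']; norm_num [cyclicPattern, Matrix.cons_val_two, Matrix.vecHead, Matrix.vecTail]
      have S10 : Real.sign (mutB 1 B 1 0) = -cyclicPattern 1 0 := by
        rw [E10, Real.sign_of_neg (by linarith : -B 1 0 < 0)]; norm_num [cyclicPattern, Matrix.cons_val_two, Matrix.vecHead, Matrix.vecTail]
      have S11 : Real.sign (mutB 1 B 1 1) = -cyclicPattern 1 1 := by
        rw [E11, Real.sign_zero]; norm_num [cyclicPattern, Matrix.cons_val_two, Matrix.vecHead, Matrix.vecTail]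
      have S12 : Real.sign (mutB 1 B 1 2) = -cyclicPattern 1 2 := by
        rw [E12, Real.sign_of_pos (by linarith : (0:ℝ) < -B 1 2)]; norm_num [cyclicPattern, Matrix.cons_val_two, Matrix.vecHead, Matrix.vecTail]
      have S20 : Real.sign (mutB 1 B 2 0) = -cyclicPattern 2 0 := by
        rw [Real.sign_of_pos hB20']; norm_num [cyclicPattern, Matrix.cons_val_two, Matrix.vecHead, Matrix.vecTail]
      have S21 : Real.sign (mutB 1 B 2 1) = -cyclicPattern 2 1 := by
        rw [E21, Real.sign_of_neg (by linarith : -B 2 1 < 0)]; norm_num [cyclicPattern, Matrix.cons_val_two, Matrix.vecHead, Matrix.vecTail]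
      have S22 : Real.sign (mutB 1 B 2 2) = -cyclicPattern 2 2 := by
        rw [E22, Real.sign_zero]; norm_num [cyclicPattern, Matrix.cons_val_two, Matrix.vecHead, Matrix.vecTail]
      intro i j
      rcases fin3all i with rfl | rfl | rfl <;> rcases fin3all j with rfl | rfl | rfl
      exacts [S00, S01, S02, S10, S11, S12, S20, S21, S22]
    · rw [wt_1, show |mutB 1 B 2 0 * mutB 1 B 0 2| = (wt B 2 * wt B 0 - wt B 1)^2 by
        rw [hprod, abs_neg, abs_of_nonneg (sq_nonneg _)]]
      exact Real.sqrt_sq (le_of_lt hm)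
    · rw [wt_2, E01, E10, show -B 0 1 * -B 1 0 = B 0 1 * B 1 0 from by ring, ← wt_2]
    · rw [wt_0, E12, E21, show -B 1 2 * -B 2 1 = B 1 2 * B 2 1 from by ring, ← wt_0]
  · intro hm
    have hB02' : 0 ≤ mutB 1 B 0 2 := by
      by_contra hcon
      push_neg at hcon
      nlinarith [mul_pos h10 h21, mul_pos hp_pos hq_pos]
    rintro (hc | hc)
    · have := hc 0 1
      rw [E01, show cyclicPattern 0 1 = -1 from by norm_num [cyclicPattern, Matrix.cons_val_two, Matrix.vecHead, Matrix.vecTail]] at this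
      have := sign_eq_neg_one_iff'.mp this
      linarith
    · have := hc 0 2
      rw [show -cyclicPattern 0 2 = -1 from by norm_num [cyclicPattern, Matrix.cons_val_two, Matrix.vecHead, Matrix.vecTail]] at this
      have := sign_eq_neg_one_iff'.mp this
      linarith

lemma core2 (d : Fin 3 → ℝ) (hd : ∀ i, 0 < d i) (B : Mat3)
    (hskew : ∀ i j, d i * B i j = -(d j * B j i))
    (hsgn : ∀ i j, Real.sign (B i j) = cyclicPattern i j) :
    (0 < wt B 0 * wt B 1 - wt B 2 →
      (∀ i j, Real.sign (mutB 2 B i j) = -cyclicPattern i j) ∧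
      wt (mutB 2 B) 2 = wt B 0 * wt B 1 - wt B 2 ∧
      wt (mutB 2 B) 0 = wt B 0 ∧ wt (mutB 2 B) 1 = wt B 1) ∧
    (wt B 0 * wt B 1 - wt B 2 ≤ 0 → ¬ IsCyclic3 (mutB 2 B)) := by
  have h12 : B 1 2 < 0 := sign_eq_neg_one_iff'.mp
    (by rw [hsgn 1 2]; norm_num [cyclicPattern, Matrix.cons_val_two, Matrix.vecHead, Matrix.vecTail])
  have h10 : 0 < B 1 0 := sign_eq_one_iff'.mp
    (by rw [hsgn 1 0]; norm_num [cyclicPattern, Matrix.cons_val_two, Matrix.vecHead, Matrix.vecTail])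
  have h21 : 0 < B 2 1 := sign_eq_one_iff'.mp
    (by rw [hsgn 2 1]; norm_num [cyclicPattern, Matrix.cons_val_two, Matrix.vecHead, Matrix.vecTail])
  have h20 : B 2 0 < 0 := sign_eq_neg_one_iff'.mp
    (by rw [hsgn 2 0]; norm_num [cyclicPattern, Matrix.cons_val_two, Matrix.vecHead, Matrix.vecTail])
  have h01 : B 0 1 < 0 := sign_eq_neg_one_iff'.mp
    (by rw [hsgn 0 1]; norm_num [cyclicPattern, Matrix.cons_val_two, Matrix.vecHead, Matrix.vecTail])
  have h02 : 0 < B 0 2 := sign_eq_one_iff'.mp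
    (by rw [hsgn 0 2]; norm_num [cyclicPattern, Matrix.cons_val_two, Matrix.vecHead, Matrix.vecTail])
  have hB11 := skew_diag hd hskew 1
  have hB22 := skew_diag hd hskew 2
  have hB00 := skew_diag hd hskew 0
  -- entries of the mutated matrix
  have E11 : mutB 2 B 1 1 = 0 := by
    rw [mutB_apply B 2 1 1 hB22]; simp [hB11]
    rw [max_eq_left (by linarith : (0:ℝ) ≤ -B 1 2), max_eq_left (le_of_lt h21)]; ring
  have E22 : mutB 2 B 2 2 = 0 := by
    rw [mutB_apply B 2 2 2 hB22]; simp [hB22]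
  have E00 : mutB 2 B 0 0 = 0 := by
    rw [mutB_apply B 2 0 0 hB22]; simp [hB00]
    rw [max_eq_right (by linarith : -B 0 2 ≤ (0:ℝ)), max_eq_right (le_of_lt h20)]; ring
  have E12 : mutB 2 B 1 2 = -B 1 2 := by
    rw [mutB_apply B 2 1 2 hB22]; simp [hB22]
  have E21 : mutB 2 B 2 1 = -B 2 1 := by
    rw [mutB_apply B 2 2 1 hB22]; simp [hB22]
  have E20 : mutB 2 B 2 0 = -B 2 0 := by
    rw [mutB_apply B 2 2 0 hB22]; simp [hB22]
  have E02 : mutB 2 B 0 2 = -B 0 2 := by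
    rw [mutB_apply B 2 0 2 hB22]; simp [hB22]
  have E10 : mutB 2 B 1 0 = B 1 0 - B 1 2 * B 2 0 := by
    rw [mutB_apply B 2 1 0 hB22]; simp
    rw [max_eq_left (by linarith : (0:ℝ) ≤ -B 1 2), max_eq_right (le_of_lt h20)]; ring
  have E01 : mutB 2 B 0 1 = B 0 1 + B 0 2 * B 2 1 := by
    rw [mutB_apply B 2 0 1 hB22]; simp
    rw [max_eq_right (by linarith : -B 0 2 ≤ (0:ℝ)), max_eq_left (le_of_lt h21)]; ring
  -- weights
  have hp2 : wt B 0 ^ 2 = -(B 1 2 * B 2 1) := by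
    rw [wt_sq]; exact abs_of_neg (mul_neg_of_neg_of_pos h12 h21)
  have hq2 : wt B 1 ^ 2 = -(B 2 0 * B 0 2) := by
    rw [wt_sq]; exact abs_of_neg (mul_neg_of_neg_of_pos h20 h02)
  have hr2 : wt B 2 ^ 2 = -(B 0 1 * B 1 0) := by
    rw [wt_sq]; exact abs_of_neg (mul_neg_of_neg_of_pos h01 h10)
  have hp_pos : 0 < wt B 0 := Real.sqrt_pos.mpr (abs_pos.mpr (ne_of_lt (mul_neg_of_neg_of_pos h12 h21)))
  have hq_pos : 0 < wt B 1 := Real.sqrt_pos.mpr (abs_pos.mpr (ne_of_lt (mul_neg_of_neg_of_pos h20 h02)))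
  have hr_pos : 0 < wt B 2 := Real.sqrt_pos.mpr (abs_pos.mpr (ne_of_lt (mul_neg_of_neg_of_pos h01 h10)))
  have hddd : (0:ℝ) < d 1 * d 2 * d 0 := mul_pos (mul_pos (hd 1) (hd 2)) (hd 0)
  have hs : B 2 1 * B 0 2 * B 1 0 = -(B 1 2 * B 2 0 * B 0 1) := by
    apply mul_left_cancel₀ hddd.ne'
    linear_combination (d 0 * B 0 2 * d 1 * B 1 0) * hskew 1 2
      + (d 1 * B 1 2 * d 0 * B 0 1) * hskew 2 0 - (d 1 * B 1 2 * d 0 * B 0 2) * hskew 0 1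
  have hpqr : wt B 0 * wt B 1 * wt B 2 = -(B 1 2 * B 2 0 * B 0 1) := by
    apply sq_inj (by positivity)
      (by nlinarith [mul_pos (mul_pos (neg_pos.mpr h12) (neg_pos.mpr h20)) (neg_pos.mpr h01)])
    rw [mul_pow, mul_pow, hp2, hq2, hr2]
    linear_combination (-(B 1 2 * B 2 0 * B 0 1)) * hs
  have hprod : mutB 2 B 0 1 * mutB 2 B 1 0 = -((wt B 0 * wt B 1 - wt B 2)^2) := by
    rw [E01, E10]
    linear_combination hr2 + (wt B 1)^2 * hp2 - (B 1 2 * B 2 1) * hq2 + hs - 2 * hpqr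
  have hsgn02 : (-(mutB 2 B 1 0)) * (B 2 1 * B 0 2)
      = wt B 0 * wt B 1 * (wt B 0 * wt B 1 - wt B 2) := by
    rw [E10]
    linear_combination (-(wt B 1)^2) * hp2 + (B 1 2 * B 2 1) * hq2 - hs + hpqr
  constructor
  · intro hm
    have hB10' : mutB 2 B 1 0 < 0 := by
      by_contra hcon
      push_neg at hcon
      nlinarith [mul_pos h21 h02, mul_pos (mul_pos hp_pos hq_pos) hm]
    have hB01' : 0 < mutB 2 B 0 1 := by
      by_contra hcon
      push_neg at hcon
      nlinarith [mul_nonneg (neg_nonneg.mpr hcon) (le_of_lt (neg_pos.mpr hB10')), mul_pos hm hm]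
    refine ⟨?_, ?_, ?_, ?_⟩
    · have S11 : Real.sign (mutB 2 B 1 1) = -cyclicPattern 1 1 := by
        rw [E11, Real.sign_zero]; norm_num [cyclicPattern, Matrix.cons_val_two, Matrix.vecHead, Matrix.vecTail]
      have S12 : Real.sign (mutB 2 B 1 2) = -cyclicPattern 1 2 := by
        rw [E12, Real.sign_of_pos (by linarith : (0:ℝ) < -B 1 2)]; norm_num [cyclicPattern, Matrix.cons_val_two, Matrix.vecHead, Matrix.vecTail]
      have S10 : Real.sign (mutB 2 B 1 0) = -cyclicPattern 1 0 := by
        rw [Real.sign_of_neg hB10']; norm_num [cyclicPattern, Matrix.cons_val_two, Matrix.vecHead, Matrix.vecTail]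
      have S21 : Real.sign (mutB 2 B 2 1) = -cyclicPattern 2 1 := by
        rw [E21, Real.sign_of_neg (by linarith : -B 2 1 < 0)]; norm_num [cyclicPattern, Matrix.cons_val_two, Matrix.vecHead, Matrix.vecTail]
      have S22 : Real.sign (mutB 2 B 2 2) = -cyclicPattern 2 2 := by
        rw [E22, Real.sign_zero]; norm_num [cyclicPattern, Matrix.cons_val_two, Matrix.vecHead, Matrix.vecTail]
      have S20 : Real.sign (mutB 2 B 2 0) = -cyclicPattern 2 0 := by
        rw [E20, Real.sign_of_pos (by linarith : (0:ℝ) < -B 2 0)]; norm_num [cyclicPattern, Matrix.cons_val_two, Matrix.vecHead, Matrix.vecTail]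
      have S01 : Real.sign (mutB 2 B 0 1) = -cyclicPattern 0 1 := by
        rw [Real.sign_of_pos hB01']; norm_num [cyclicPattern, Matrix.cons_val_two, Matrix.vecHead, Matrix.vecTail]
      have S02 : Real.sign (mutB 2 B 0 2) = -cyclicPattern 0 2 := by
        rw [E02, Real.sign_of_neg (by linarith : -B 0 2 < 0)]; norm_num [cyclicPattern, Matrix.cons_val_two, Matrix.vecHead, Matrix.vecTail]
      have S00 : Real.sign (mutB 2 B 0 0) = -cyclicPattern 0 0 := by
        rw [E00, Real.sign_zero]; norm_num [cyclicPattern, Matrix.cons_val_two, Matrix.vecHead, Matrix.vecTail]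
      intro i j
      rcases fin3all i with rfl | rfl | rfl <;> rcases fin3all j with rfl | rfl | rfl
      exacts [S00, S01, S02, S10, S11, S12, S20, S21, S22]
    · rw [wt_2, show |mutB 2 B 0 1 * mutB 2 B 1 0| = (wt B 0 * wt B 1 - wt B 2)^2 by
        rw [hprod, abs_neg, abs_of_nonneg (sq_nonneg _)]]
      exact Real.sqrt_sq (le_of_lt hm)
    · rw [wt_0, E12, E21, show -B 1 2 * -B 2 1 = B 1 2 * B 2 1 from by ring, ← wt_0]
    · rw [wt_1, E20, E02, show -B 2 0 * -B 0 2 = B 2 0 * B 0 2 from by ring, ← wt_1]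
  · intro hm
    have hB10' : 0 ≤ mutB 2 B 1 0 := by
      by_contra hcon
      push_neg at hcon
      nlinarith [mul_pos h21 h02, mul_pos hp_pos hq_pos]
    rintro (hc | hc)
    · have := hc 1 2
      rw [E12, show cyclicPattern 1 2 = -1 from by norm_num [cyclicPattern, Matrix.cons_val_two, Matrix.vecHead, Matrix.vecTail]] at this
      have := sign_eq_neg_one_iff'.mp this
      linarith
    · have := hc 1 0
      rw [show -cyclicPattern 1 0 = -1 from by norm_num [cyclicPattern, Matrix.cons_val_two, Matrix.vecHead, Matrix.vecTail]] at this
      have := sign_eq_neg_one_iff'.mp this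
      linarith

lemma core0 (d : Fin 3 → ℝ) (hd : ∀ i, 0 < d i) (B : Mat3)
    (hskew : ∀ i j, d i * B i j = -(d j * B j i))
    (hsgn : ∀ i j, Real.sign (B i j) = cyclicPattern i j) :
    (0 < wt B 1 * wt B 2 - wt B 0 →
      (∀ i j, Real.sign (mutB 0 B i j) = -cyclicPattern i j) ∧
      wt (mutB 0 B) 0 = wt B 1 * wt B 2 - wt B 0 ∧
      wt (mutB 0 B) 1 = wt B 1 ∧ wt (mutB 0 B) 2 = wt B 2) ∧
    (wt B 1 * wt B 2 - wt B 0 ≤ 0 → ¬ IsCyclic3 (mutB 0 B)) := by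
  have h20 : B 2 0 < 0 := sign_eq_neg_one_iff'.mp
    (by rw [hsgn 2 0]; norm_num [cyclicPattern, Matrix.cons_val_two, Matrix.vecHead, Matrix.vecTail])
  have h21 : 0 < B 2 1 := sign_eq_one_iff'.mp
    (by rw [hsgn 2 1]; norm_num [cyclicPattern, Matrix.cons_val_two, Matrix.vecHead, Matrix.vecTail])
  have h02 : 0 < B 0 2 := sign_eq_one_iff'.mp
    (by rw [hsgn 0 2]; norm_num [cyclicPattern, Matrix.cons_val_two, Matrix.vecHead, Matrix.vecTail])
  have h01 : B 0 1 < 0 := sign_eq_neg_one_iff'.mp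
    (by rw [hsgn 0 1]; norm_num [cyclicPattern, Matrix.cons_val_two, Matrix.vecHead, Matrix.vecTail])
  have h12 : B 1 2 < 0 := sign_eq_neg_one_iff'.mp
    (by rw [hsgn 1 2]; norm_num [cyclicPattern, Matrix.cons_val_two, Matrix.vecHead, Matrix.vecTail])
  have h10 : 0 < B 1 0 := sign_eq_one_iff'.mp
    (by rw [hsgn 1 0]; norm_num [cyclicPattern, Matrix.cons_val_two, Matrix.vecHead, Matrix.vecTail])
  have hB22 := skew_diag hd hskew 2
  have hB00 := skew_diag hd hskew 0
  have hB11 := skew_diag hd hskew 1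
  -- entries of the mutated matrix
  have E22 : mutB 0 B 2 2 = 0 := by
    rw [mutB_apply B 0 2 2 hB00]; simp [hB22]
    rw [max_eq_left (by linarith : (0:ℝ) ≤ -B 2 0), max_eq_left (le_of_lt h02)]; ring
  have E00 : mutB 0 B 0 0 = 0 := by
    rw [mutB_apply B 0 0 0 hB00]; simp [hB00]
  have E11 : mutB 0 B 1 1 = 0 := by
    rw [mutB_apply B 0 1 1 hB00]; simp [hB11]
    rw [max_eq_right (by linarith : -B 1 0 ≤ (0:ℝ)), max_eq_right (le_of_lt h01)]; ring
  have E20 : mutB 0 B 2 0 = -B 2 0 := by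
    rw [mutB_apply B 0 2 0 hB00]; simp [hB00]
  have E02 : mutB 0 B 0 2 = -B 0 2 := by
    rw [mutB_apply B 0 0 2 hB00]; simp [hB00]
  have E01 : mutB 0 B 0 1 = -B 0 1 := by
    rw [mutB_apply B 0 0 1 hB00]; simp [hB00]
  have E10 : mutB 0 B 1 0 = -B 1 0 := by
    rw [mutB_apply B 0 1 0 hB00]; simp [hB00]
  have E21 : mutB 0 B 2 1 = B 2 1 - B 2 0 * B 0 1 := by
    rw [mutB_apply B 0 2 1 hB00]; simp
    rw [max_eq_left (by linarith : (0:ℝ) ≤ -B 2 0), max_eq_right (le_of_lt h01)]; ring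
  have E12 : mutB 0 B 1 2 = B 1 2 + B 1 0 * B 0 2 := by
    rw [mutB_apply B 0 1 2 hB00]; simp
    rw [max_eq_right (by linarith : -B 1 0 ≤ (0:ℝ)), max_eq_left (le_of_lt h02)]; ring
  -- weights
  have hp2 : wt B 1 ^ 2 = -(B 2 0 * B 0 2) := by
    rw [wt_sq]; exact abs_of_neg (mul_neg_of_neg_of_pos h20 h02)
  have hq2 : wt B 2 ^ 2 = -(B 0 1 * B 1 0) := by
    rw [wt_sq]; exact abs_of_neg (mul_neg_of_neg_of_pos h01 h10)
  have hr2 : wt B 0 ^ 2 = -(B 1 2 * B 2 1) := by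
    rw [wt_sq]; exact abs_of_neg (mul_neg_of_neg_of_pos h12 h21)
  have hp_pos : 0 < wt B 1 := Real.sqrt_pos.mpr (abs_pos.mpr (ne_of_lt (mul_neg_of_neg_of_pos h20 h02)))
  have hq_pos : 0 < wt B 2 := Real.sqrt_pos.mpr (abs_pos.mpr (ne_of_lt (mul_neg_of_neg_of_pos h01 h10)))
  have hr_pos : 0 < wt B 0 := Real.sqrt_pos.mpr (abs_pos.mpr (ne_of_lt (mul_neg_of_neg_of_pos h12 h21)))
  have hddd : (0:ℝ) < d 2 * d 0 * d 1 := mul_pos (mul_pos (hd 2) (hd 0)) (hd 1)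
  have hs : B 0 2 * B 1 0 * B 2 1 = -(B 2 0 * B 0 1 * B 1 2) := by
    apply mul_left_cancel₀ hddd.ne'
    linear_combination (d 1 * B 1 0 * d 2 * B 2 1) * hskew 2 0
      + (d 2 * B 2 0 * d 1 * B 1 2) * hskew 0 1 - (d 2 * B 2 0 * d 1 * B 1 0) * hskew 1 2
  have hpqr : wt B 1 * wt B 2 * wt B 0 = -(B 2 0 * B 0 1 * B 1 2) := by
    apply sq_inj (by positivity)
      (by nlinarith [mul_pos (mul_pos (neg_pos.mpr h20) (neg_pos.mpr h01)) (neg_pos.mpr h12)])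
    rw [mul_pow, mul_pow, hp2, hq2, hr2]
    linear_combination (-(B 2 0 * B 0 1 * B 1 2)) * hs
  have hprod : mutB 0 B 1 2 * mutB 0 B 2 1 = -((wt B 1 * wt B 2 - wt B 0)^2) := by
    rw [E12, E21]
    linear_combination hr2 + (wt B 2)^2 * hp2 - (B 2 0 * B 0 2) * hq2 + hs - 2 * hpqr
  have hsgn02 : (-(mutB 0 B 2 1)) * (B 0 2 * B 1 0)
      = wt B 1 * wt B 2 * (wt B 1 * wt B 2 - wt B 0) := by
    rw [E21]
    linear_combination (-(wt B 2)^2) * hp2 + (B 2 0 * B 0 2) * hq2 - hs + hpqr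
  constructor
  · intro hm
    have hB21' : mutB 0 B 2 1 < 0 := by
      by_contra hcon
      push_neg at hcon
      nlinarith [mul_pos h02 h10, mul_pos (mul_pos hp_pos hq_pos) hm]
    have hB12' : 0 < mutB 0 B 1 2 := by
      by_contra hcon
      push_neg at hcon
      nlinarith [mul_nonneg (neg_nonneg.mpr hcon) (le_of_lt (neg_pos.mpr hB21')), mul_pos hm hm]
    refine ⟨?_, ?_, ?_, ?_⟩
    · have S22 : Real.sign (mutB 0 B 2 2) = -cyclicPattern 2 2 := by
        rw [E22, Real.sign_zero]; norm_num [cyclicPattern, Matrix.cons_val_two, Matrix.vecHead, Matrix.vecTail]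
      have S20 : Real.sign (mutB 0 B 2 0) = -cyclicPattern 2 0 := by
        rw [E20, Real.sign_of_pos (by linarith : (0:ℝ) < -B 2 0)]; norm_num [cyclicPattern, Matrix.cons_val_two, Matrix.vecHead, Matrix.vecTail]
      have S21 : Real.sign (mutB 0 B 2 1) = -cyclicPattern 2 1 := by
        rw [Real.sign_of_neg hB21']; norm_num [cyclicPattern, Matrix.cons_val_two, Matrix.vecHead, Matrix.vecTail]
      have S02 : Real.sign (mutB 0 B 0 2) = -cyclicPattern 0 2 := by
        rw [E02, Real.sign_of_neg (by linarith : -B 0 2 < 0)]; norm_num [cyclicPattern, Matrix.cons_val_two, Matrix.vecHead, Matrix.vecTail]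
      have S00 : Real.sign (mutB 0 B 0 0) = -cyclicPattern 0 0 := by
        rw [E00, Real.sign_zero]; norm_num [cyclicPattern, Matrix.cons_val_two, Matrix.vecHead, Matrix.vecTail]
      have S01 : Real.sign (mutB 0 B 0 1) = -cyclicPattern 0 1 := by
        rw [E01, Real.sign_of_pos (by linarith : (0:ℝ) < -B 0 1)]; norm_num [cyclicPattern, Matrix.cons_val_two, Matrix.vecHead, Matrix.vecTail]
      have S12 : Real.sign (mutB 0 B 1 2) = -cyclicPattern 1 2 := by
        rw [Real.sign_of_pos hB12']; norm_num [cyclicPattern, Matrix.cons_val_two, Matrix.vecHead, Matrix.vecTail]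
      have S10 : Real.sign (mutB 0 B 1 0) = -cyclicPattern 1 0 := by
        rw [E10, Real.sign_of_neg (by linarith : -B 1 0 < 0)]; norm_num [cyclicPattern, Matrix.cons_val_two, Matrix.vecHead, Matrix.vecTail]
      have S11 : Real.sign (mutB 0 B 1 1) = -cyclicPattern 1 1 := by
        rw [E11, Real.sign_zero]; norm_num [cyclicPattern, Matrix.cons_val_two, Matrix.vecHead, Matrix.vecTail]
      intro i j
      rcases fin3all i with rfl | rfl | rfl <;> rcases fin3all j with rfl | rfl | rfl
      exacts [S00, S01, S02, S10, S11, S12, S20, S21, S22]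
    · rw [wt_0, show |mutB 0 B 1 2 * mutB 0 B 2 1| = (wt B 1 * wt B 2 - wt B 0)^2 by
        rw [hprod, abs_neg, abs_of_nonneg (sq_nonneg _)]]
      exact Real.sqrt_sq (le_of_lt hm)
    · rw [wt_1, E20, E02, show -B 2 0 * -B 0 2 = B 2 0 * B 0 2 from by ring, ← wt_1]
    · rw [wt_2, E01, E10, show -B 0 1 * -B 1 0 = B 0 1 * B 1 0 from by ring, ← wt_2]
  · intro hm
    have hB21' : 0 ≤ mutB 0 B 2 1 := by
      by_contra hcon
      push_neg at hcon
      nlinarith [mul_pos h02 h10, mul_pos hp_pos hq_pos]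
    rintro (hc | hc)
    · have := hc 2 0
      rw [E20, show cyclicPattern 2 0 = -1 from by norm_num [cyclicPattern, Matrix.cons_val_two, Matrix.vecHead, Matrix.vecTail]] at this
      have := sign_eq_neg_one_iff'.mp this
      linarith
    · have := hc 2 1
      rw [show -cyclicPattern 2 1 = -1 from by norm_num [cyclicPattern, Matrix.cons_val_two, Matrix.vecHead, Matrix.vecTail]] at this
      have := sign_eq_neg_one_iff'.mp this
      linarith

lemma finadd1_0 : (0:Fin 3)+1 = 1 := rfl
lemma finadd2_0 : (0:Fin 3)+2 = 2 := rfl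
lemma finadd1_1 : (1:Fin 3)+1 = 2 := rfl
lemma finadd2_1 : (1:Fin 3)+2 = 0 := rfl
lemma finadd1_2 : (2:Fin 3)+1 = 0 := rfl
lemma finadd2_2 : (2:Fin 3)+2 = 1 := rfl

lemma bridgePos (d : Fin 3 → ℝ) (hd : ∀ i, 0 < d i) (B : Mat3)
    (hskew : ∀ i j, d i * B i j = -(d j * B j i))
    (hsgn : ∀ i j, Real.sign (B i j) = cyclicPattern i j) (k : Fin 3) :
    (0 < wt B (k+1) * wt B (k+2) - wt B k →
      IsCyclic3 (mutB k B) ∧ wt (mutB k B) k = wt B (k+1) * wt B (k+2) - wt B k ∧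
      wt (mutB k B) (k+1) = wt B (k+1) ∧ wt (mutB k B) (k+2) = wt B (k+2)) ∧
    (wt B (k+1) * wt B (k+2) - wt B k ≤ 0 → ¬ IsCyclic3 (mutB k B)) := by
  rcases fin3all k with rfl | rfl | rfl
  · rw [finadd1_0, finadd2_0]
    obtain ⟨f1, f2⟩ := core0 d hd B hskew hsgn
    exact ⟨fun hm => ⟨Or.inr (f1 hm).1, (f1 hm).2.1, (f1 hm).2.2.1, (f1 hm).2.2.2⟩, f2⟩
  · rw [finadd1_1, finadd2_1]
    obtain ⟨f1, f2⟩ := core1 d hd B hskew hsgn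
    exact ⟨fun hm => ⟨Or.inr (f1 hm).1, (f1 hm).2.1, (f1 hm).2.2.1, (f1 hm).2.2.2⟩, f2⟩
  · rw [finadd1_2, finadd2_2]
    obtain ⟨f1, f2⟩ := core2 d hd B hskew hsgn
    exact ⟨fun hm => ⟨Or.inr (f1 hm).1, (f1 hm).2.1, (f1 hm).2.2.1, (f1 hm).2.2.2⟩, f2⟩

lemma bridge (d : Fin 3 → ℝ) (hd : ∀ i, 0 < d i) (B : Mat3)
    (hskew : ∀ i j, d i * B i j = -(d j * B j i))
    (hcyc : IsCyclic3 B) (k : Fin 3) :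
    (0 < wt B (k+1) * wt B (k+2) - wt B k →
      IsCyclic3 (mutB k B) ∧ wt (mutB k B) k = wt B (k+1) * wt B (k+2) - wt B k ∧
      wt (mutB k B) (k+1) = wt B (k+1) ∧ wt (mutB k B) (k+2) = wt B (k+2)) ∧
    (wt B (k+1) * wt B (k+2) - wt B k ≤ 0 → ¬ IsCyclic3 (mutB k B)) := by
  rcases hcyc with hpos | hneg
  · exact bridgePos d hd B hskew hpos k
  · have hskew' : ∀ i j, d i * (-B) i j = -(d j * (-B) j i) := by
      intro i j; simp only [Matrix.neg_apply]; linarith [hskew i j]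
    have hsgn' : ∀ i j, Real.sign ((-B) i j) = cyclicPattern i j := by
      intro i j; rw [Matrix.neg_apply, Real.sign_neg, hneg i j]; ring
    have hBkk : B k k = 0 := skew_diag hd hskew k
    have hmut : mutB k (-B) = -(mutB k B) := mutB_neg B k hBkk
    obtain ⟨f1, f2⟩ := bridgePos d hd (-B) hskew' hsgn' k
    rw [hmut] at f1 f2
    simp only [wt_neg] at f1 f2
    constructor
    · intro hm
      obtain ⟨hc, w1, w2, w3⟩ := f1 hm
      exact ⟨IsCyclic3_neg.mp hc, w1, w2, w3⟩
    · intro hm hcc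
      exact f2 hm (IsCyclic3_neg.mpr hcc)

-- ===== original defs (continued) =====






-- ===== list plumbing =====
lemma CG_fst {n : ℕ} (B0 : Matrix (Fin n) (Fin n) ℝ) :
    ∀ (w : List (Fin n)) (t : Matrix (Fin n) (Fin n) ℝ × Matrix (Fin n) (Fin n) ℝ × Matrix (Fin n) (Fin n) ℝ),
    (w.foldl (CGstep B0) t).1 = w.foldl (fun M k => mutB k M) t.1 := by
  intro w
  induction w with
  | nil => intro t; rfl
  | cons k l ih => intro t; simp only [List.foldl_cons]; rw [ih]; rfl

lemma Bmat_nil {n : ℕ} (B : Matrix (Fin n) (Fin n) ℝ) : Bmat B [] = B := rfl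

lemma Bmat_cons {n : ℕ} (B : Matrix (Fin n) (Fin n) ℝ) (k : Fin n) (l : List (Fin n)) :
    Bmat B (k :: l) = Bmat (mutB k B) l := by
  unfold Bmat CGmat
  rw [CG_fst, CG_fst]
  rfl

-- ===== scalar dynamics =====
lemma mono_step {p q r : ℝ} (hp : 2 ≤ p) (hq : 2 ≤ q) (hr : 2 ≤ r)
    (hC : p^2 + q^2 + r^2 - p*q*r ≤ 4) : 2 ≤ q*r - p := by
  by_contra hcon
  push_neg at hcon
  have h1 : (0:ℝ) < 2 - (q*r - p) := by linarith
  have h2 : (0:ℝ) < q*r - 2 - (q*r - p) := by nlinarith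
  nlinarith [sq_nonneg (q - r), mul_pos h1 h2]

lemma escA_base {p q r : ℝ} (hq : q ≤ p) (hr : r ≤ p) (h0q : 0 < q) (h0r : 0 < r)
    (hsum : p + q + r ≤ 3) (hm : 0 < q*r - p) : False := by
  have hq1 : 1 < q := by nlinarith
  have hr1 : 1 < r := by nlinarith
  nlinarith

lemma escA_step {p q r δ : ℝ} (hδ : 0 < δ) (hq : q ≤ p) (hr : r ≤ p) (h0q : 0 < q) (h0r : 0 < r)
    (hmin : q ≤ 2 - δ ∨ r ≤ 2 - δ) (hm : 0 < q*r - p) :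
    (q*r - p < q ∨ q*r - p < r) ∧ q*r - p ≤ p - δ := by
  have hq1 : 1 < q := by nlinarith
  have hr1 : 1 < r := by nlinarith
  rcases hmin with h | h
  · constructor
    · right; nlinarith
    · nlinarith
  · constructor
    · left; nlinarith
    · nlinarith

lemma escB_base {p q r e : ℝ} (hp : 2 ≤ p) (hq : 2 ≤ q) (hr : 2 ≤ r) (he : 0 < e)
    (hE : p^2 + q^2 + r^2 - p*q*r = 4 + e) (hsum : p + q + r ≤ 6) : False := by
  have hp2 : p = 2 := by linarith
  have hq2 : q = 2 := by linarith
  have hr2 : r = 2 := by linarith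
  rw [hp2, hq2, hr2] at hE
  norm_num at hE
  linarith

lemma escB_lt {p q r e : ℝ} (hp : 2 ≤ p) (hq : 2 ≤ q) (hr : 2 ≤ r) (he : 0 < e)
    (hqp : q ≤ p) (hrp : r ≤ p)
    (hE : p^2 + q^2 + r^2 - p*q*r = 4 + e) (hm : 0 < q*r - p) :
    q*r - p < q ∨ q*r - p < r := by
  rcases le_total q r with h | h
  · right
    by_contra hcon
    push_neg at hcon
    nlinarith [mul_nonneg (by linarith : (0:ℝ) ≤ q*r - p - r) (by nlinarith : (0:ℝ) ≤ q*r - (q*r - p) - r),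
      mul_nonneg (by linarith : (0:ℝ) ≤ q - 2) (by nlinarith : (0:ℝ) ≤ r^2 - q - 2)]
  · left
    by_contra hcon
    push_neg at hcon
    nlinarith [mul_nonneg (by linarith : (0:ℝ) ≤ q*r - p - q) (by nlinarith : (0:ℝ) ≤ q*r - (q*r - p) - q),
      mul_nonneg (by linarith : (0:ℝ) ≤ r - 2) (by nlinarith : (0:ℝ) ≤ q^2 - r - 2)]

lemma escB_dec {p q r e γ : ℝ} (hp : 2 ≤ p) (hq : 2 ≤ q) (hr : 2 ≤ r) (he : 0 < e)
    (hγ : 0 < γ) (hγ2 : γ^2 ≤ 4*e) (hqp : q ≤ p) (hrp : r ≤ p)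
    (hE : p^2 + q^2 + r^2 - p*q*r = 4 + e) :
    q*r - p ≤ p - γ := by
  have hnn : 0 ≤ 2*p - q*r := by
    by_contra hcon
    push_neg at hcon
    rcases le_total q r with h | h
    · nlinarith [mul_nonneg (by linarith : (0:ℝ) ≤ p - r) (by nlinarith : (0:ℝ) ≤ q*r - p - r),
        mul_nonneg (by linarith : (0:ℝ) ≤ q - 2) (by nlinarith : (0:ℝ) ≤ r^2 - q - 2)]
    · nlinarith [mul_nonneg (by linarith : (0:ℝ) ≤ p - q) (by nlinarith : (0:ℝ) ≤ q*r - p - q),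
        mul_nonneg (by linarith : (0:ℝ) ≤ r - 2) (by nlinarith : (0:ℝ) ≤ q^2 - r - 2)]
  have hsq : (2*p - q*r)^2 ≥ γ^2 := by
    nlinarith [mul_nonneg (by nlinarith : (0:ℝ) ≤ q^2 - 4) (by nlinarith : (0:ℝ) ≤ r^2 - 4)]
  nlinarith

-- positivity of weights for cyclic matrices
lemma wt_pos_of_cyclic {B : Mat3} (hcyc : IsCyclic3 B) (i : Fin 3) : 0 < wt B i := by
  have key : ∀ a b : Fin 3, cyclicPattern a b ≠ 0 → B a b ≠ 0 := by
    intro a b hab h0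
    rcases hcyc with hc | hc
    · have := hc a b; rw [h0, Real.sign_zero] at this; exact hab this.symm
    · have := hc a b; rw [h0, Real.sign_zero] at this
      apply hab; linarith
  have h1 : B (i+1) (i+2) ≠ 0 := by
    apply key
    rcases fin3all i with rfl | rfl | rfl <;>
      simp only [finadd1_0, finadd2_0, finadd1_1, finadd2_1, finadd1_2, finadd2_2] <;>
      norm_num [cyclicPattern, Matrix.cons_val_two, Matrix.vecHead, Matrix.vecTail]
  have h2 : B (i+2) (i+1) ≠ 0 := by
    apply key
    rcases fin3all i with rfl | rfl | rfl <;>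
      simp only [finadd1_0, finadd2_0, finadd1_1, finadd2_1, finadd1_2, finadd2_2] <;>
      norm_num [cyclicPattern, Matrix.cons_val_two, Matrix.vecHead, Matrix.vecTail]
  exact Real.sqrt_pos.mpr (abs_pos.mpr (mul_ne_zero h1 h2))

lemma escapeA : ∀ n : ℕ, ∀ (B : Mat3) (d : Fin 3 → ℝ) (δ : ℝ),
    (∀ i, 0 < d i) → (∀ i j, d i * B i j = -(d j * B j i)) → IsCyclic3 B → 0 < δ →
    (∃ i, wt B i ≤ 2 - δ) → (wt B 0 + wt B 1 + wt B 2 ≤ 3 + n * δ) →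
    ∀ k, (∀ j, wt B j ≤ wt B k) →
    ∃ l, ReducedSeq (k :: l) ∧ ¬ IsCyclic3 (Bmat B (k :: l)) := by
  intro n
  induction n with
  | zero =>
    intro B d δ hd hskew hcyc hδ _hmin hsum k hmax
    obtain ⟨_br1, br2⟩ := bridge d hd B hskew hcyc k
    have hm : wt B (k+1) * wt B (k+2) - wt B k ≤ 0 := by
      by_contra hm'
      push_neg at hm'
      have hre := cycle3 (wt B) k
      exact escA_base (hmax (k+1)) (hmax (k+2)) (wt_pos_of_cyclic hcyc (k+1))
        (wt_pos_of_cyclic hcyc (k+2)) (by push_cast at hsum; linarith) (by linarith)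
    exact ⟨[], List.isChain_singleton k, by rw [Bmat_cons, Bmat_nil]; exact br2 hm⟩
  | succ n ih =>
    intro B d δ hd hskew hcyc hδ hmin hsum k hmax
    obtain ⟨br1, br2⟩ := bridge d hd B hskew hcyc k
    rcases le_or_gt (wt B (k+1) * wt B (k+2) - wt B k) 0 with hm | hm
    · exact ⟨[], List.isChain_singleton k, by rw [Bmat_cons, Bmat_nil]; exact br2 hm⟩
    · obtain ⟨hcyc', wk, wk1, wk2⟩ := br1 hm
      set B' := mutB k B with hB'
      -- min of neighbours
      have hmin2 : wt B (k+1) ≤ 2 - δ ∨ wt B (k+2) ≤ 2 - δ := by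
        obtain ⟨i0, hi0⟩ := hmin
        rcases fin3_cases i0 k with rfl | rfl | rfl
        · left; linarith [hmax (i0+1)]
        · left; exact hi0
        · right; exact hi0
      obtain ⟨hlt, hdec⟩ := escA_step hδ (hmax (k+1)) (hmax (k+2))
        (wt_pos_of_cyclic hcyc (k+1)) (wt_pos_of_cyclic hcyc (k+2)) hmin2 hm
      -- new sum bound
      have hsum' : wt B' 0 + wt B' 1 + wt B' 2 ≤ 3 + n * δ := by
        rw [cycle3 (wt B') k, wk, wk1, wk2]
        have := cycle3 (wt B) k
        push_cast at hsum ⊢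
        linarith
      -- new min witness
      have hmin' : ∃ i, wt B' i ≤ 2 - δ := by
        rcases hmin2 with h | h
        · exact ⟨k+1, by rw [wk1]; exact h⟩
        · exact ⟨k+2, by rw [wk2]; exact h⟩
      obtain ⟨k', hk'⟩ := exists_max3 (wt B')
      have hkk' : k ≠ k' := by
        intro heq
        rcases hlt with h | h
        · have := hk' (k+1); rw [wk1, ← heq, wk] at this; linarith
        · have := hk' (k+2); rw [wk2, ← heq, wk] at this; linarith
      obtain ⟨l, hred, hnc⟩ := ih B' d δ hd (skew_mut hd hskew k) hcyc' hδ hmin' hsum' k' hk'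
      exact ⟨k' :: l, List.isChain_cons_cons.mpr ⟨hkk', hred⟩, by rw [Bmat_cons]; exact hnc⟩

lemma escapeB : ∀ n : ℕ, ∀ (B : Mat3) (d : Fin 3 → ℝ) (e γ : ℝ),
    (∀ i, 0 < d i) → (∀ i j, d i * B i j = -(d j * B j i)) → IsCyclic3 B →
    0 < e → 0 < γ → γ^2 ≤ 4*e →
    (∀ i, 2 ≤ wt B i) →
    (wt B 0^2 + wt B 1^2 + wt B 2^2 - wt B 0 * wt B 1 * wt B 2 = 4 + e) →
    (wt B 0 + wt B 1 + wt B 2 ≤ 6 + n * γ) →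
    ∀ k, (∀ j, wt B j ≤ wt B k) →
    ∃ l, ReducedSeq (k :: l) ∧ ¬ IsCyclic3 (Bmat B (k :: l)) := by
  intro n
  induction n with
  | zero =>
    intro B d e γ hd hskew hcyc he hγ hγ2 hge hE hsum k hmax
    exfalso
    exact escB_base (hge 0) (hge 1) (hge 2) he hE (by push_cast at hsum; linarith)
  | succ n ih =>
    intro B d e γ hd hskew hcyc he hγ hγ2 hge hE hsum k hmax
    obtain ⟨br1, br2⟩ := bridge d hd B hskew hcyc k
    have hEk : wt B k^2 + wt B (k+1)^2 + wt B (k+2)^2 - wt B k * wt B (k+1) * wt B (k+2)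
        = 4 + e := by rw [← cycle3E (wt B) k]; exact hE
    rcases le_or_gt (wt B (k+1) * wt B (k+2) - wt B k) 0 with hm | hm
    · exact ⟨[], List.isChain_singleton k, by rw [Bmat_cons, Bmat_nil]; exact br2 hm⟩
    · obtain ⟨hcyc', wk, wk1, wk2⟩ := br1 hm
      set B' := mutB k B with hB'
      have hlt : wt B (k+1) * wt B (k+2) - wt B k < wt B (k+1) ∨
          wt B (k+1) * wt B (k+2) - wt B k < wt B (k+2) :=
        escB_lt (hge k) (hge (k+1)) (hge (k+2)) he (hmax (k+1)) (hmax (k+2))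
          (by linarith [hEk]) hm
      obtain ⟨k', hk'⟩ := exists_max3 (wt B')
      have hkk' : k ≠ k' := by
        intro heq
        rcases hlt with h | h
        · have := hk' (k+1); rw [wk1, ← heq, wk] at this; linarith
        · have := hk' (k+2); rw [wk2, ← heq, wk] at this; linarith
      rcases lt_or_ge (wt B (k+1) * wt B (k+2) - wt B k) 2 with hm2 | hm2
      · -- switch to escapeA
        set δ := 2 - (wt B (k+1) * wt B (k+2) - wt B k) with hδdef
        have hδ : 0 < δ := by rw [hδdef]; linarith
        have hmin' : ∃ i, wt B' i ≤ 2 - δ := ⟨k, by rw [wk]; rw [hδdef]; linarith⟩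
        obtain ⟨n', hn'⟩ := exists_nat_ge ((wt B' 0 + wt B' 1 + wt B' 2 - 3) / δ)
        have hsum' : wt B' 0 + wt B' 1 + wt B' 2 ≤ 3 + n' * δ := by
          have := (div_le_iff₀ hδ).mp hn'
          linarith
        obtain ⟨l, hred, hnc⟩ := escapeA n' B' d δ hd (skew_mut hd hskew k) hcyc' hδ hmin'
          hsum' k' hk'
        exact ⟨k' :: l, List.isChain_cons_cons.mpr ⟨hkk', hred⟩, by rw [Bmat_cons]; exact hnc⟩
      · -- stay in B-phase
        have hge' : ∀ i, 2 ≤ wt B' i := by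
          intro i
          rcases fin3_cases i k with rfl | rfl | rfl
          · rw [wk]; exact hm2
          · rw [wk1]; exact hge _
          · rw [wk2]; exact hge _
        have hE' : wt B' 0^2 + wt B' 1^2 + wt B' 2^2 - wt B' 0 * wt B' 1 * wt B' 2 = 4 + e := by
          rw [cycle3E (wt B') k, wk, wk1, wk2]
          linear_combination hEk
        have hdec : wt B (k+1) * wt B (k+2) - wt B k ≤ wt B k - γ :=
          escB_dec (hge k) (hge (k+1)) (hge (k+2)) he hγ hγ2 (hmax (k+1)) (hmax (k+2)) hEk
        have hsum' : wt B' 0 + wt B' 1 + wt B' 2 ≤ 6 + n * γ := by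
          rw [cycle3 (wt B') k, wk, wk1, wk2]
          have := cycle3 (wt B) k
          push_cast at hsum ⊢
          linarith
        obtain ⟨l, hred, hnc⟩ := ih B' d e γ hd (skew_mut hd hskew k) hcyc' he hγ hγ2 hge'
          hE' hsum' k' hk'
        exact ⟨k' :: l, List.isChain_cons_cons.mpr ⟨hkk', hred⟩, by rw [Bmat_cons]; exact hnc⟩

lemma descend (d : Fin 3 → ℝ) (hd : ∀ i, 0 < d i) :
    ∀ (w : List (Fin 3)) (B : Mat3),
    (∀ i j, d i * B i j = -(d j * B j i)) → IsCyclic3 B → (∀ i, 2 ≤ wt B i) →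
    (wt B 0^2 + wt B 1^2 + wt B 2^2 - wt B 0 * wt B 1 * wt B 2 ≤ 4) →
    IsCyclic3 (Bmat B w) := by
  intro w
  induction w with
  | nil => intro B _ hc _ _; exact hc
  | cons k l ih =>
    intro B hskew hcyc hge hE
    obtain ⟨br1, _br2⟩ := bridge d hd B hskew hcyc k
    have hEk : wt B k^2 + wt B (k+1)^2 + wt B (k+2)^2 - wt B k * wt B (k+1) * wt B (k+2) ≤ 4 := by
      rw [← cycle3E (wt B) k]; exact hE
    have hm2 : 2 ≤ wt B (k+1) * wt B (k+2) - wt B k :=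
      mono_step (hge k) (hge (k+1)) (hge (k+2)) (by linarith)
    obtain ⟨hcyc', wk, wk1, wk2⟩ := br1 (by linarith)
    rw [Bmat_cons]
    apply ih (mutB k B) (skew_mut hd hskew k) hcyc'
    · intro i
      rcases fin3_cases i k with rfl | rfl | rfl
      · rw [wk]; exact hm2
      · rw [wk1]; exact hge _
      · rw [wk2]; exact hge _
    · rw [cycle3E (wt (mutB k B)) k, wk, wk1, wk2]
      rw [cycle3E (wt B) k] at hE
      nlinarith [hE]

lemma skew_entry {d : Fin 3 → ℝ} {B : Mat3}
    (h : (Matrix.diagonal d * B)ᵀ = -(Matrix.diagonal d * B)) :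
    ∀ i j, d i * B i j = -(d j * B j i) := by
  intro i j
  have := congrFun (congrFun h j) i
  simpa [Matrix.transpose_apply, Matrix.neg_apply, Matrix.diagonal_mul] using this

lemma wt0_sq (B : Mat3) : wt B 0 ^ 2 = |B 1 2 * B 2 1| := by
  rw [wt_0]; exact Real.sq_sqrt (abs_nonneg _)
lemma wt1_sq (B : Mat3) : wt B 1 ^ 2 = |B 2 0 * B 0 2| := by
  rw [wt_1]; exact Real.sq_sqrt (abs_nonneg _)
lemma wt2_sq (B : Mat3) : wt B 2 ^ 2 = |B 0 1 * B 1 0| := by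
  rw [wt_2]; exact Real.sq_sqrt (abs_nonneg _)

lemma skew_s {d : Fin 3 → ℝ} {B : Mat3} (hd : ∀ i, 0 < d i)
    (hskew : ∀ i j, d i * B i j = -(d j * B j i)) :
    B 1 0 * B 2 1 * B 0 2 = -(B 0 1 * B 1 2 * B 2 0) := by
  have hddd : (0:ℝ) < d 0 * d 1 * d 2 := mul_pos (mul_pos (hd 0) (hd 1)) (hd 2)
  apply mul_left_cancel₀ hddd.ne'
  linear_combination (d 2 * B 2 1 * d 0 * B 0 2) * hskew 0 1
    + (d 0 * B 0 1 * d 2 * B 2 0) * hskew 1 2 - (d 0 * B 0 1 * d 2 * B 2 1) * hskew 2 0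

lemma prod_abs {d : Fin 3 → ℝ} {B : Mat3} (hd : ∀ i, 0 < d i)
    (hskew : ∀ i j, d i * B i j = -(d j * B j i)) :
    wt B 2 * wt B 0 * wt B 1 = |B 0 1 * B 1 2 * B 2 0| := by
  apply sq_inj (by have := wt_nonneg B 2; have := wt_nonneg B 0; have := wt_nonneg B 1; positivity) (abs_nonneg _)
  rw [mul_pow, mul_pow, wt2_sq, wt0_sq, wt1_sq, ← abs_mul, ← abs_mul, sq_abs]
  rw [show B 0 1 * B 1 0 * (B 1 2 * B 2 1) * (B 2 0 * B 0 2)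
      = -((B 0 1 * B 1 2 * B 2 0)^2) from by
    linear_combination (B 0 1 * B 1 2 * B 2 0) * skew_s hd hskew]
  rw [abs_neg, abs_of_nonneg (sq_nonneg _)]

theorem cluster_cyclic_iff' (B : Mat3) (hskewS : SkewSymmetrizable B) (hcyc : IsCyclic3 B) :
    ClusterCyclic B ↔
      ((∀ i j, i ≠ j → 4 ≤ |B i j * B j i|) ∧
        |B 0 1 * B 1 0| + |B 1 2 * B 2 1| + |B 2 0 * B 0 2| - |B 0 1 * B 1 2 * B 2 0| ≤ 4) := by
  obtain ⟨d, hd, hmat⟩ := hskewS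
  have hskew := skew_entry hmat
  have hEeq : wt B 0^2 + wt B 1^2 + wt B 2^2 - wt B 0 * wt B 1 * wt B 2
      = |B 0 1 * B 1 0| + |B 1 2 * B 2 1| + |B 2 0 * B 0 2| - |B 0 1 * B 1 2 * B 2 0| := by
    linear_combination wt0_sq B + wt1_sq B + wt2_sq B - prod_abs hd hskew
  constructor
  · intro hCC
    have part1 : ∀ i, 2 ≤ wt B i := by
      by_contra hcon
      push_neg at hcon
      obtain ⟨i0, hi0⟩ := hcon
      set δ := 2 - wt B i0 with hδdef
      have hδ : 0 < δ := by rw [hδdef]; linarith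
      obtain ⟨k, hk⟩ := exists_max3 (wt B)
      obtain ⟨n, hn⟩ := exists_nat_ge ((wt B 0 + wt B 1 + wt B 2 - 3) / δ)
      have hsum : wt B 0 + wt B 1 + wt B 2 ≤ 3 + n * δ := by
        have := (div_le_iff₀ hδ).mp hn
        linarith
      obtain ⟨l, hred, hnc⟩ := escapeA n B d δ hd hskew hcyc hδ
        ⟨i0, by rw [hδdef]; linarith⟩ hsum k hk
      exact hnc (hCC _ hred)
    have key : ∀ t, 4 ≤ wt B t ^ 2 := fun t => by nlinarith [part1 t]
    constructor
    · intro i j hij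
      rcases fin3all i with rfl | rfl | rfl <;> rcases fin3all j with rfl | rfl | rfl
      · exact absurd rfl hij
      · exact le_of_le_of_eq (key 2) (wt2_sq B)
      · exact le_of_le_of_eq (key 1) ((wt1_sq B).trans (by rw [mul_comm]))
      · exact le_of_le_of_eq (key 2) ((wt2_sq B).trans (by rw [mul_comm]))
      · exact absurd rfl hij
      · exact le_of_le_of_eq (key 0) (wt0_sq B)
      · exact le_of_le_of_eq (key 1) (wt1_sq B)
      · exact le_of_le_of_eq (key 0) ((wt0_sq B).trans (by rw [mul_comm]))
      · exact absurd rfl hij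
    · by_contra hcon
      push_neg at hcon
      rw [← hEeq] at hcon
      set e := wt B 0^2 + wt B 1^2 + wt B 2^2 - wt B 0 * wt B 1 * wt B 2 - 4 with hedef
      have he : 0 < e := by rw [hedef]; linarith
      set γ := min 1 e with hγdef
      have hγ : 0 < γ := lt_min one_pos he
      have hγ2 : γ^2 ≤ 4*e := by
        rcases le_total 1 e with h | h
        · rw [hγdef, min_eq_left h]; nlinarith
        · rw [hγdef, min_eq_right h]; nlinarith
      obtain ⟨k, hk⟩ := exists_max3 (wt B)
      obtain ⟨n, hn⟩ := exists_nat_ge ((wt B 0 + wt B 1 + wt B 2 - 6) / γ)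
      have hsum : wt B 0 + wt B 1 + wt B 2 ≤ 6 + n * γ := by
        have := (div_le_iff₀ hγ).mp hn
        linarith
      obtain ⟨l, hred, hnc⟩ := escapeB n B d e γ hd hskew hcyc he hγ hγ2 part1
        (by rw [hedef]; ring) hsum k hk
      exact hnc (hCC _ hred)
  · rintro ⟨h4, hE⟩ w _hred
    apply descend d hd w B hskew hcyc
    · intro i
      have hnn := wt_nonneg B i
      rcases fin3all i with rfl | rfl | rfl
      · have := le_of_le_of_eq (h4 1 2 (by decide)) (wt0_sq B).symm; nlinarith
      · have := le_of_le_of_eq (h4 2 0 (by decide)) (wt1_sq B).symm; nlinarith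
      · have := le_of_le_of_eq (h4 0 1 (by decide)) (wt2_sq B).symm; nlinarith
    · rw [hEeq]; exact hE

theorem cluster_cyclic_iff (B : Mat3) (hskew : SkewSymmetrizable B) (hcyc : IsCyclic3 B) :
    ClusterCyclic B ↔
      ((∀ i j, i ≠ j → 4 ≤ |B i j * B j i|) ∧
        |B 0 1 * B 1 0| + |B 1 2 * B 2 1| + |B 2 0 * B 0 2| - |B 0 1 * B 1 2 * B 2 0| ≤ 4) :=
  cluster_cyclic_iff' B hskew hcyc
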